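/- arXiv:1409.3610 — 3 statements merged into one kernel-verified Lean document; each statement's English description precedes it below -/
import Mathlib

section
/- Let d ≥ 1, let ω = (ω_1, …, ω_{2d+1}) be a sequence with values in a finite set S, and let N ⊆ S. Suppose that every even-indexed entry lies in N (ω_{2k} ∈ N for all 1 ≤ k ≤ d), and that ω_1 ∉ N and ω_{2d+1} ∉ N. Then the Laurent monomial x(ω) = (∏_{i odd} x_{ω_i}) · (∏_{i even} x_{ω_i})^{-1} has degree at most −1 with respect to the variables indexed by N. -/
/-- The exponent of the variable `x s` in the Laurent monomial
`x(ω) = (∏_{i odd} x_{ω i}) · (∏_{i even} x_{ω i})⁻¹`, where `i` ranges over `1, …, 2d+1`. -/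
def pathExp {S : Type*} [DecidableEq S] (d : ℕ) (ω : ℕ → S) (s : S) : ℤ :=
  (((Finset.Icc 1 (2 * d + 1)).filter fun i => Odd i ∧ ω i = s).card : ℤ) -
  (((Finset.Icc 1 (2 * d + 1)).filter fun i => Even i ∧ ω i = s).card : ℤ)

lemma sum_card_filter {S : Type*} [DecidableEq S] (ω : ℕ → S) (N : Finset S)
    (I : Finset ℕ) (P : ℕ → Prop) [DecidablePred P] :
    ∑ s ∈ N, ((I.filter fun i => P i ∧ ω i = s).card : ℤ)
      = ((I.filter fun i => P i ∧ ω i ∈ N).card : ℤ) := by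
  simp only [Finset.card_filter]
  push_cast
  rw [Finset.sum_comm]
  refine Finset.sum_congr rfl fun i _ => ?_
  by_cases hP : P i
  · by_cases hN : ω i ∈ N
    · rw [Finset.sum_eq_single (ω i)]
      · simp [hP, hN]
      · intro b _ hne; simp [Ne.symm hne]
      · intro h; exact absurd hN h
    · simp_all
  · simp [hP]

theorem stmt1 {S : Type*} [Fintype S] [DecidableEq S] (d : ℕ) (hd : 1 ≤ d)
    (ω : ℕ → S) (N : Finset S)
    (heven : ∀ k, 1 ≤ k → k ≤ d → ω (2 * k) ∈ N)
    (hfirst : ω 1 ∉ N) (hlast : ω (2 * d + 1) ∉ N) :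
    (∑ s ∈ N, pathExp d ω s) ≤ -1 := by
  unfold pathExp
  rw [Finset.sum_sub_distrib, sum_card_filter, sum_card_filter]
  set A := (Finset.Icc 1 (2 * d + 1)).filter fun i => Odd i ∧ ω i ∈ N with hA
  set B := (Finset.Icc 1 (2 * d + 1)).filter fun i => Even i ∧ ω i ∈ N with hB
  have hAcard : A.card ≤ d - 1 := by
    have : A ⊆ (Finset.Icc 1 (d - 1)).image fun k => 2 * k + 1 := by
      intro i hi
      simp only [hA, Finset.mem_filter, Finset.mem_Icc] at hi
      obtain ⟨⟨h1, h2⟩, ⟨k, hk⟩, hN⟩ := hi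
      refine Finset.mem_image.2 ⟨k, Finset.mem_Icc.2 ⟨?_, ?_⟩, by omega⟩
      · rcases Nat.eq_zero_or_pos k with h | h
        · exfalso; apply hfirst; rwa [show (1:ℕ) = i by omega]
        · omega
      · rcases Nat.lt_or_ge k d with h | h
        · omega
        · exfalso; apply hlast; rwa [show 2 * d + 1 = i by omega]
    calc A.card ≤ _ := Finset.card_le_card this
      _ ≤ (Finset.Icc 1 (d-1)).card := Finset.card_image_le
      _ = d - 1 := by simp
  have hBcard : d ≤ B.card := by
    have : (Finset.Icc 1 d).image (fun k => 2 * k) ⊆ B := by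
      intro i hi
      obtain ⟨k, hk, rfl⟩ := Finset.mem_image.1 hi
      simp only [Finset.mem_Icc] at hk
      simp only [hB, Finset.mem_filter, Finset.mem_Icc]
      exact ⟨⟨by omega, by omega⟩, ⟨k, by ring⟩, heven k hk.1 hk.2⟩
    calc d = (Finset.Icc 1 d).card := by simp
      _ = ((Finset.Icc 1 d).image (fun k => 2 * k)).card :=
        (Finset.card_image_of_injective _ (fun a b h => by omega)).symm
      _ ≤ B.card := Finset.card_le_card this
  have h1 : (A.card : ℤ) ≤ (d : ℤ) - 1 := by
    have := hAcard; omega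
  have h2 : (d : ℤ) ≤ (B.card : ℤ) := by exact_mod_cast hBcard
  omega
end

section
/- Let d ≥ 1, let ω = (ω_1, …, ω_{2d+1}) be a sequence in a set S, and let N ⊆ S. Suppose that for every odd index i with ω_i ∈ N, at least one neighbor entry ω_{i−1} or ω_{i+1} (whichever exists) lies in N. If #{odd i : ω_i ∈ N} > #{even i : ω_i ∈ N}, then there exist odd indices a ≤ b with b ≥ a + 2 such that ω_k ∈ N for all a ≤ k ≤ b, and moreover ω_{a−1} ∉ N (if a > 1) and ω_{b+1} ∉ N (if b < 2d+1); that is, ω contains a maximal N-run of odd length at least 3 beginning and ending at odd indices. -/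
namespace Stmt4Aux

variable {S : Type*}

def startSet (ω : ℕ → S) (N : Set S) (i : ℕ) : Set ℕ :=
  {a | 1 ≤ a ∧ ∀ k, a ≤ k → k ≤ i → ω k ∈ N}

noncomputable def rs (ω : ℕ → S) (N : Set S) (i : ℕ) : ℕ := sInf (startSet ω N i)

def endSet (ω : ℕ → S) (N : Set S) (d : ℕ) (i : ℕ) : Set ℕ :=
  {b | b ≤ 2 * d + 1 ∧ ∀ k, i ≤ k → k ≤ b → ω k ∈ N}

noncomputable def re (ω : ℕ → S) (N : Set S) (d : ℕ) (i : ℕ) : ℕ := sSup (endSet ω N d i)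

lemma self_mem_startSet (ω : ℕ → S) (N : Set S) {i : ℕ} (h1 : 1 ≤ i) (hN : ω i ∈ N) :
    i ∈ startSet ω N i :=
  ⟨h1, fun k hk hk' => by have : k = i := le_antisymm hk' hk; rw [this]; exact hN⟩

lemma rs_mem (ω : ℕ → S) (N : Set S) {i : ℕ} (h1 : 1 ≤ i) (hN : ω i ∈ N) :
    rs ω N i ∈ startSet ω N i :=
  Nat.sInf_mem ⟨i, self_mem_startSet ω N h1 hN⟩

lemma rs_le (ω : ℕ → S) (N : Set S) {i : ℕ} (h1 : 1 ≤ i) (hN : ω i ∈ N) :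
    rs ω N i ≤ i := Nat.sInf_le (self_mem_startSet ω N h1 hN)

lemma rs_boundary (ω : ℕ → S) (N : Set S) {i : ℕ} (h1 : 1 ≤ i) (hN : ω i ∈ N)
    (hlt : 1 < rs ω N i) : ω (rs ω N i - 1) ∉ N := by
  intro hmem
  have hm := rs_mem ω N h1 hN
  have hin : rs ω N i - 1 ∈ startSet ω N i := by
    refine ⟨by omega, fun k hk hk' => ?_⟩
    rcases eq_or_lt_of_le hk with h | h
    · rw [← h]; exact hmem
    · exact hm.2 k (by omega) hk'
  have h : rs ω N i ≤ rs ω N i - 1 := Nat.sInf_le hin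
  omega

lemma self_mem_endSet (ω : ℕ → S) (N : Set S) {d i : ℕ} (h2 : i ≤ 2 * d + 1) (hN : ω i ∈ N) :
    i ∈ endSet ω N d i :=
  ⟨h2, fun k hk hk' => by have : k = i := le_antisymm hk' hk; rw [this]; exact hN⟩

lemma endSet_bdd (ω : ℕ → S) (N : Set S) (d i : ℕ) : BddAbove (endSet ω N d i) :=
  ⟨2 * d + 1, fun b hb => hb.1⟩

lemma re_mem (ω : ℕ → S) (N : Set S) {d i : ℕ} (h2 : i ≤ 2 * d + 1) (hN : ω i ∈ N) :
    re ω N d i ∈ endSet ω N d i :=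
  Nat.sSup_mem ⟨i, self_mem_endSet ω N h2 hN⟩ (endSet_bdd ω N d i)

lemma le_re (ω : ℕ → S) (N : Set S) {d i : ℕ} (h2 : i ≤ 2 * d + 1) (hN : ω i ∈ N) :
    i ≤ re ω N d i := le_csSup (endSet_bdd ω N d i) (self_mem_endSet ω N h2 hN)

lemma re_boundary (ω : ℕ → S) (N : Set S) {d i : ℕ} (h2 : i ≤ 2 * d + 1) (hN : ω i ∈ N)
    (hlt : re ω N d i < 2 * d + 1) : ω (re ω N d i + 1) ∉ N := by
  intro hmem
  have hm := re_mem ω N h2 hN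
  have hin : re ω N d i + 1 ∈ endSet ω N d i := by
    refine ⟨by omega, fun k hk hk' => ?_⟩
    by_cases h : k ≤ re ω N d i
    · exact hm.2 k hk h
    · have : k = re ω N d i + 1 := by omega
      rw [this]; exact hmem
  have h : re ω N d i + 1 ≤ re ω N d i := le_csSup (endSet_bdd ω N d i) hin
  omega

end Stmt4Aux

open Stmt4Aux

open scoped Classical in
/-- If every odd-indexed `N`-entry of `ω = (ω_1,…,ω_{2d+1})` has a neighbor in `N`, and
there are strictly more odd-indexed than even-indexed entries in `N`, then `ω` contains a
maximal `N`-run of odd length at least `3` beginning and ending at odd indices. -/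
theorem stmt4 {S : Type*} (d : ℕ) (hd : 1 ≤ d) (ω : ℕ → S) (N : Set S)
    (hnbr : ∀ i, 1 ≤ i → i ≤ 2 * d + 1 → Odd i → ω i ∈ N →
      (1 < i ∧ ω (i - 1) ∈ N) ∨ (i < 2 * d + 1 ∧ ω (i + 1) ∈ N))
    (hcard : (((Finset.Icc 1 (2 * d + 1)).filter fun i => Even i ∧ ω i ∈ N).card <
      ((Finset.Icc 1 (2 * d + 1)).filter fun i => Odd i ∧ ω i ∈ N).card)) :
    ∃ a b, Odd a ∧ Odd b ∧ 1 ≤ a ∧ b ≤ 2 * d + 1 ∧ a + 2 ≤ b ∧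
      (∀ k, a ≤ k → k ≤ b → ω k ∈ N) ∧
      (1 < a → ω (a - 1) ∉ N) ∧ (b < 2 * d + 1 → ω (b + 1) ∉ N) := by
  classical
  by_contra hcon
  push_neg at hcon
  refine absurd hcard (not_lt.mpr ?_)
  have key : ∀ i ∈ (Finset.Icc 1 (2 * d + 1)).filter fun i => Odd i ∧ ω i ∈ N,
      (Odd (rs ω N i) → i + 1 ≤ 2 * d + 1 ∧ ω (i + 1) ∈ N) ∧
      (¬ Odd (rs ω N i) → 1 < i ∧ ω (i - 1) ∈ N) := by
    intro i hi
    simp only [Finset.mem_filter, Finset.mem_Icc] at hi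
    obtain ⟨⟨hi1, hi2⟩, hiodd, hiN⟩ := hi
    have ha := rs_mem ω N hi1 hiN
    have hai := rs_le ω N hi1 hiN
    constructor
    · intro hodd
      have hb := re_mem ω N (d := d) hi2 hiN
      have hib := le_re ω N (d := d) hi2 hiN
      have heodd : ¬ Odd (re ω N d i) := by
        intro hoddb
        by_cases hlen : rs ω N i + 2 ≤ re ω N d i
        · have hall : ∀ k, rs ω N i ≤ k → k ≤ re ω N d i → ω k ∈ N := by
            intro k hk hk'
            by_cases h : k ≤ i
            · exact ha.2 k hk h
            · exact hb.2 k (by omega) hk'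
          have hQ1 : 1 < rs ω N i → ω (rs ω N i - 1) ∉ N :=
            fun h => rs_boundary ω N hi1 hiN h
          have := hcon _ _ hodd hoddb ha.1 hb.1 hlen hall hQ1
          exact (re_boundary ω N hi2 hiN this.1) this.2
        · have p1 := Nat.odd_iff.mp hodd
          have p2 := Nat.odd_iff.mp hoddb
          have p3 := Nat.odd_iff.mp hiodd
          have hrs : rs ω N i = i := by omega
          have hre : re ω N d i = i := by omega
          rcases hnbr i hi1 hi2 hiodd hiN with ⟨hgt, hmem⟩ | ⟨hlt, hmem⟩
          · have := rs_boundary ω N hi1 hiN (by omega)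
            rw [hrs] at this; exact this hmem
          · have := re_boundary ω N hi2 hiN (by omega)
            rw [hre] at this; exact this hmem
      have p1 := Nat.odd_iff.mp hiodd
      have p2 := Nat.not_odd_iff.mp heodd
      have hb1 := hb.1
      refine ⟨by omega, hb.2 (i + 1) (by omega) (by omega)⟩
    · intro hnodd
      have hlt : rs ω N i < i :=
        lt_of_le_of_ne hai (fun h => hnodd (by rw [h]; exact hiodd))
      have h1 := ha.1
      exact ⟨by omega, ha.2 (i - 1) (by omega) (by omega)⟩
  refine Finset.card_le_card_of_injOn
    (fun i => if Odd (rs ω N i) then i + 1 else i - 1) ?_ ?_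
  · intro i hi
    have k := key i hi
    simp only [Finset.mem_coe, Finset.mem_filter, Finset.mem_Icc] at hi ⊢
    obtain ⟨⟨hi1, hi2⟩, hiodd, hiN⟩ := hi
    by_cases h : Odd (rs ω N i)
    · simp only [h, if_true]
      obtain ⟨h2, hN⟩ := k.1 h
      exact ⟨⟨by omega, h2⟩, Odd.add_one hiodd, hN⟩
    · simp only [h, if_false]
      obtain ⟨h2, hN⟩ := k.2 h
      exact ⟨⟨by omega, by omega⟩, Nat.Odd.sub_odd hiodd odd_one, hN⟩
  · intro i hi j hj hfij
    have ki := key i hi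
    have kj := key j hj
    simp only [Finset.mem_coe, Finset.mem_filter, Finset.mem_Icc] at hi hj
    obtain ⟨⟨hi1, hi2⟩, hiodd, hiN⟩ := hi
    obtain ⟨⟨hj1, hj2⟩, hjodd, hjN⟩ := hj
    simp only at hfij
    by_cases h1 : Odd (rs ω N i) <;> by_cases h2 : Odd (rs ω N j) <;>
      simp only [h1, h2, if_true, if_false] at hfij
    · omega
    · exfalso
      obtain ⟨_, hNi1⟩ := ki.1 h1
      have hji : j = i + 2 := by omega
      have hmj := rs_mem ω N hj1 hjN
      have hmi := rs_mem ω N hi1 hiN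
      have hle1 : rs ω N i ≤ rs ω N j :=
        Nat.sInf_le ⟨hmj.1, fun k hk hk' => hmj.2 k hk (by omega)⟩
      have hle2 : rs ω N j ≤ rs ω N i := by
        refine Nat.sInf_le ⟨hmi.1, fun k hk hk' => ?_⟩
        by_cases hki : k ≤ i
        · exact hmi.2 k hk hki
        · by_cases hki1 : k = i + 1
          · rw [hki1]; exact hNi1
          · have : k = j := by omega
            rw [this]; exact hjN
      have heq : rs ω N i = rs ω N j := le_antisymm hle1 hle2
      exact h2 (by rw [← heq]; exact h1)
    · exfalso
      obtain ⟨_, hNj1⟩ := kj.1 h2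
      have hji : i = j + 2 := by omega
      have hmj := rs_mem ω N hj1 hjN
      have hmi := rs_mem ω N hi1 hiN
      have hle1 : rs ω N j ≤ rs ω N i :=
        Nat.sInf_le ⟨hmi.1, fun k hk hk' => hmi.2 k hk (by omega)⟩
      have hle2 : rs ω N i ≤ rs ω N j := by
        refine Nat.sInf_le ⟨hmj.1, fun k hk hk' => ?_⟩
        by_cases hki : k ≤ j
        · exact hmj.2 k hk hki
        · by_cases hki1 : k = j + 1
          · rw [hki1]; exact hNj1
          · have : k = i := by omega
            rw [this]; exact hiN
      have heq : rs ω N i = rs ω N j := le_antisymm hle2 hle1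
      exact h1 (by rw [heq]; exact h2)
    · omega
end

section
/- Let A be a free ℤ-module with basis B, let R = ℤ[x_1^{±1}, …, x_n^{±1}], and let φ : A → R be an additive (ℤ-linear) map. Fix Γ ∈ B and suppose: (i) φ(Γ) is a single Laurent monomial with all exponents nonnegative and coefficient 1; (ii) for every Σ ∈ B with Σ ≠ Γ appearing in the support of a given element y, φ(Σ) is a ℤ-linear combination of proper Laurent monomials (monomials having at least one negative exponent). If y = Σ_{Σ ∈ B} m_Σ Σ (finite support) and all coefficients of the Laurent polynomial φ(y) are nonnegative, then m_Γ ≥ 0. -/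
/-- Abstraction of the proof of Theorem 5.7: `φ` is the `T`-expansion map into the Laurent
polynomial ring `ℤ[x₁^{±1},…,x_n^{±1}]` (represented by finitely supported functions from
exponent vectors to coefficients).  If `φ(Γ)` is a single Laurent monomial with nonnegative
exponents and coefficient `1`, and for every other basis element `σ` in the support of `y`
the expansion `φ(σ)` is a `ℤ`-linear combination of proper Laurent monomials, then
nonnegativity of all coefficients of `φ(y)` forces the coefficient of `Γ` in `y`
to be nonnegative. -/
theorem stmt6 {A : Type*} [AddCommGroup A] {B : Type*} (b : Module.Basis B ℤ A) (n : ℕ)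
    (φ : A →+ ((Fin n → ℤ) →₀ ℤ)) (Γ : B) (y : A)
    (a : Fin n → ℤ) (ha : ∀ i, 0 ≤ a i)
    (hΓ : φ (b Γ) = Finsupp.single a 1)
    (hproper : ∀ σ : B, σ ≠ Γ → b.repr y σ ≠ 0 →
      ∀ v ∈ (φ (b σ)).support, ∃ i, v i < 0)
    (hy : ∀ v, 0 ≤ φ y v) :
    0 ≤ b.repr y Γ := by
  have hr : ((b.repr y).sum fun σ c => c • b σ) = y := by
    rw [← Finsupp.linearCombination_apply, b.linearCombination_repr]
  have key : φ y a = b.repr y Γ := by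
    conv_lhs => rw [← hr]
    rw [Finsupp.sum, map_sum, Finset.sum_apply']
    rw [Finset.sum_eq_single Γ]
    · rw [map_zsmul, hΓ]
      simp
    · intro σ hσ hne
      have hz : (φ (b σ)) a = 0 := by
        by_contra h
        obtain ⟨i, hi⟩ := hproper σ hne (Finsupp.mem_support_iff.mp hσ) a
          (Finsupp.mem_support_iff.mpr h)
        exact absurd (ha i) (not_le.mpr hi)
      rw [map_zsmul]
      simp [hz]
    · intro hΓ'
      have : b.repr y Γ = 0 := Finsupp.notMem_support_iff.mp hΓ'
      rw [map_zsmul, hΓ, this]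
      simp
  rw [← key]
  exact hy a
end
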